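/- Every group homomorphism from $SL_2(\mathbb{Z}/5)$ to $GL_2(\mathbb{Z}_3)$, the group of invertible $2 \times 2$ matrices over the ring of $3$-adic integers, is trivial. -/

import Mathlib

open Matrix

namespace SL2Aux

instance fact5 : Fact (Nat.Prime 5) := ⟨by norm_num⟩

set_option maxRecDepth 40000 in
lemma aux_zmod3 : ∀ A : Matrix (Fin 2) (Fin 2) (ZMod 3), A ^ 5 = 1 → A = 1 := by decide

lemma aux_det5 : det (1 + 1 + 1 + 1 + 1 : Matrix (Fin 2) (Fin 2) (ZMod 3)) = 1 := by decide

lemma no_five_torsion (x : Matrix.GeneralLinearGroup (Fin 2) ℤ_[3]) (hx : x ^ 5 = 1) :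
    x = 1 := by
  set B : Matrix (Fin 2) (Fin 2) ℤ_[3] := (x : Matrix (Fin 2) (Fin 2) ℤ_[3]) with hBdef
  have hB : B ^ 5 = 1 := by
    have := congrArg Units.val hx
    simpa using this
  set φ : Matrix (Fin 2) (Fin 2) ℤ_[3] →+* Matrix (Fin 2) (Fin 2) (ZMod 3) := (PadicInt.toZMod (p := 3)).mapMatrix with hφ
  have h1 : φ B = 1 := aux_zmod3 (φ B) (by rw [← _root_.map_pow, hB, _root_.map_one])
  set C : Matrix (Fin 2) (Fin 2) ℤ_[3] := B ^ 4 + B ^ 3 + B ^ 2 + B + 1 with hC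
  have hMC : (B - 1) * C = 0 := by
    have h2 : (B - 1) * C = B ^ 5 - 1 := by rw [hC]; noncomm_ring
    rw [h2, hB, sub_self]
  have hdetC : IsUnit C.det := by
    by_contra h
    have hm : C.det ∈ IsLocalRing.maximalIdeal ℤ_[3] := (IsLocalRing.mem_maximalIdeal _).mpr h
    rw [← PadicInt.ker_toZMod, RingHom.mem_ker] at hm
    have h0 : (φ C).det = 0 := by rw [← RingHom.map_det]; exact hm
    rw [hC] at h0
    simp only [_root_.map_add, _root_.map_pow, _root_.map_one, h1, one_pow] at h0
    rw [aux_det5] at h0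
    exact one_ne_zero h0
  obtain ⟨u, hu⟩ := (Matrix.isUnit_iff_isUnit_det C).mpr hdetC
  have hM0 : B - 1 = 0 := by
    calc B - 1 = (B - 1) * (C * ↑u⁻¹) := by rw [← hu, Units.mul_inv, mul_one]
    _ = ((B - 1) * C) * ↑u⁻¹ := by rw [mul_assoc]
    _ = 0 := by rw [hMC, zero_mul]
  exact Units.ext (show (x : Matrix (Fin 2) (Fin 2) ℤ_[3]) = 1 from sub_eq_zero.mp hM0)

abbrev SL5 := Matrix.SpecialLinearGroup (Fin 2) (ZMod 5)

lemma transvec_pow_five (i j : Fin 2) (hij : i ≠ j) (c : ZMod 5) :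
    (transvection i j c) ^ 5 = 1 := by
  have h2 : ∀ a b : ZMod 5,
      transvection i j a * transvection i j b = transvection i j (a + b) := fun a b =>
    transvection_mul_transvection_same i j hij a b
  rw [pow_succ, pow_succ, pow_succ, pow_succ, pow_one, h2, h2, h2, h2]
  have h3 : c + c + c + c + c = 0 := by
    have h4 : c + c + c + c + c = 5 * c := by ring
    rw [h4, show (5 : ZMod 5) = 0 from rfl, zero_mul]
  rw [h3, transvection_zero]

def tSL (t : TransvectionStruct (Fin 2) (ZMod 5)) : SL5 := ⟨t.toMatrix, t.det⟩

variable (f : SL5 →* Matrix.GeneralLinearGroup (Fin 2) ℤ_[3])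

lemma kills (x : SL5) (h : x ^ 5 = 1) : f x = 1 :=
  no_five_torsion _ (by rw [← _root_.map_pow, h, _root_.map_one])

lemma f_tSL (t : TransvectionStruct (Fin 2) (ZMod 5)) : f (tSL t) = 1 := by
  apply kills
  apply Subtype.ext
  rw [Matrix.SpecialLinearGroup.coe_pow, Matrix.SpecialLinearGroup.coe_one]
  exact transvec_pow_five t.i t.j t.hij t.c

lemma coe_list_prod (L : List (TransvectionStruct (Fin 2) (ZMod 5))) :
    (((L.map tSL).prod : SL5) : Matrix (Fin 2) (Fin 2) (ZMod 5)) =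
      (L.map TransvectionStruct.toMatrix).prod := by
  induction L with
  | nil => simp
  | cons t L ih =>
    rw [List.map_cons, List.map_cons, List.prod_cons, List.prod_cons,
      Matrix.SpecialLinearGroup.coe_mul, ih]
    rfl

set_option maxRecDepth 40000 in
lemma diag_decomp : ∀ a b : ZMod 5, a * b = 1 →
    diagonal ![a, b] = transvection 0 1 a * transvection 1 0 (-b) * transvection 0 1 a *
      transvection 0 1 (-1) * transvection 1 0 1 * transvection 0 1 (-1) := by decide

lemma f_diag (D : Fin 2 → ZMod 5) (hD : det (diagonal D) = 1) :
    f ⟨diagonal D, hD⟩ = 1 := by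
  have hab : D 0 * D 1 = 1 := by rwa [det_diagonal, Fin.prod_univ_two] at hD
  have hfun : D = ![D 0, D 1] := by funext i; fin_cases i <;> rfl
  have key : (⟨diagonal D, hD⟩ : SL5) =
      tSL ⟨0, 1, by decide, D 0⟩ * tSL ⟨1, 0, by decide, -(D 1)⟩ * tSL ⟨0, 1, by decide, D 0⟩ *
      tSL ⟨0, 1, by decide, -1⟩ * tSL ⟨1, 0, by decide, 1⟩ * tSL ⟨0, 1, by decide, -1⟩ := by
    apply Subtype.ext
    simp only [Matrix.SpecialLinearGroup.coe_mul]
    show diagonal D = transvection 0 1 (D 0) * transvection 1 0 (-(D 1)) *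
      transvection 0 1 (D 0) * transvection 0 1 (-1) * transvection 1 0 1 * transvection 0 1 (-1)
    conv_lhs => rw [hfun]
    exact diag_decomp (D 0) (D 1) hab
  rw [key]
  simp only [_root_.map_mul, f_tSL, one_mul]

lemma prod_one (L : List (TransvectionStruct (Fin 2) (ZMod 5))) :
    f ((L.map tSL).prod) = 1 := by
  rw [MonoidHom.map_list_prod]
  apply List.prod_eq_one
  intro y hy
  rw [List.map_map, List.mem_map] at hy
  obtain ⟨t, -, rfl⟩ := hy
  exact f_tSL f t

end SL2Aux

open SL2Aux in
/-- Every group homomorphism from `SL₂(ℤ/5)` to `GL₂(ℤ₃)`, the group of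
invertible `2 × 2` matrices over the `3`-adic integers, is trivial. -/
theorem SL2_ZMod5_hom_to_GL2_Zp3_trivial
    (f : Matrix.SpecialLinearGroup (Fin 2) (ZMod 5) →*
      Matrix.GeneralLinearGroup (Fin 2) ℤ_[3]) : f = 1 := by
  refine MonoidHom.ext fun x => ?_
  obtain ⟨L, L', D, h⟩ := Matrix.Pivot.exists_list_transvec_mul_mul_list_transvec_eq_diagonal
    ((x : Matrix (Fin 2) (Fin 2) (ZMod 5)))
  have hdetD : Matrix.det (Matrix.diagonal D) = 1 := by
    rw [← h]
    simp [Matrix.det_mul, x.prop]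
  have key : (L.map tSL).prod * x * (L'.map tSL).prod = (⟨Matrix.diagonal D, hdetD⟩ : SL5) := by
    apply Subtype.ext
    simp only [Matrix.SpecialLinearGroup.coe_mul, coe_list_prod]
    exact h
  have h1 := prod_one f L
  have h2 := prod_one f L'
  have h3 := f_diag f D hdetD
  have h4 := congrArg f key
  rw [_root_.map_mul, _root_.map_mul, h1, h2, one_mul, mul_one, h3] at h4
  simpa using h4
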